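/- For τ in the upper half-plane, the theta constants a(j) = θ[j/4, 0](4τ, 0) = Σ_{n∈ℤ} exp(4πiτ(n+j/4)²) satisfy a(1) = a(3), and the Veronese-type quadric relation holds: with X₀X₃ and X₁X₂ both expanding via the product formula Σ_{i,j∈ℤ/2ℤ} a(c-a+2i)a(d-b+2j)·(basis element indexed by (a+c+2i, b+d+2j)), the coefficient vectors of X₀X₃ and X₁X₂ coincide, yielding X₀X₃ = X₁X₂. -/
import Mathlib


open Complex Real

/-- The theta constant `a(j) = θ[j/4,0](4τ,0) = Σ_{n∈ℤ} exp(4πiτ(n+j/4)²)`. -/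
noncomputable def thetaA (τ : ℂ) (j : ℤ) : ℂ :=
  ∑' n : ℤ, Complex.exp (4 * (π : ℂ) * Complex.I * τ * ((n : ℂ) + (j : ℂ) / 4) ^ 2)

/-- The Fukaya product of the generators indexed by `(a,b), (c,d) ∈ (ℤ/2ℤ)²`,
as a coefficient vector on the basis indexed by `(ℤ/4ℤ)²`:
`X_{(a,b)} X_{(c,d)} = Σ_{i,j ∈ ℤ/2ℤ} a(c-a+2i) a(d-b+2j) Y_{(a+c+2i, b+d+2j)}`. -/
noncomputable def fukayaProd (τ : ℂ) (A C : ℤ × ℤ) : ZMod 4 × ZMod 4 → ℂ :=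
  fun w =>
    ∑ i ∈ Finset.range 2, ∑ j ∈ Finset.range 2,
      if w = (((A.1 + C.1 + 2 * (i : ℤ) : ℤ) : ZMod 4),
              ((A.2 + C.2 + 2 * (j : ℤ) : ℤ) : ZMod 4)) then
        thetaA τ (C.1 - A.1 + 2 * (i : ℤ)) * thetaA τ (C.2 - A.2 + 2 * (j : ℤ))
      else 0

/-- For `τ` in the upper half-plane, `a(1) = a(3)`, and the coefficient vectors
of the products `X₀X₃` and `X₁X₂` coincide, yielding the Veronese quadric
relation `X₀X₃ = X₁X₂` (with `X₀ = (0,0)`, `X₁ = (1,0)`, `X₂ = (0,1)`,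
`X₃ = (1,1)`). -/

lemma thetaA_one_eq_three (τ : ℂ) : thetaA τ 1 = thetaA τ 3 := by
  unfold thetaA
  rw [← (Equiv.subLeft (-1 : ℤ)).tsum_eq]
  refine tsum_congr fun n => ?_
  congr 1
  push_cast [Equiv.subLeft_apply]
  ring

lemma thetaA_neg_one (τ : ℂ) : thetaA τ (-1) = thetaA τ 1 := by
  unfold thetaA
  rw [← (Equiv.neg ℤ).tsum_eq]
  refine tsum_congr fun n => ?_
  congr 1
  push_cast [Equiv.neg_apply]
  ring

theorem veronese_quadric (τ : ℂ) (hτ : 0 < τ.im) :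
    thetaA τ 1 = thetaA τ 3 ∧
    fukayaProd τ (0, 0) (1, 1) = fukayaProd τ (1, 0) (0, 1) := by
  refine ⟨thetaA_one_eq_three τ, ?_⟩
  funext w
  simp only [fukayaProd, Finset.sum_range_succ, Finset.sum_range_zero]
  norm_num [thetaA_one_eq_three τ, thetaA_neg_one τ]
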